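/- For a positive integer d and integer k with 0 <= k <= d-1, the Gaussian binomial coefficient [d-1 choose k]_{q} is congruent to (-1)^k * q^{-k(k+1)/2} modulo the d-th cyclotomic polynomial Phi_d(q) (equivalently, q^{k(k+1)/2} * [d-1 choose k]_q ≡ (-1)^k mod Phi_d(q)). -/
import Mathlib


open Polynomial

/-- The Gaussian binomial coefficient `[n choose k]_q` as a polynomial in `ℤ[q]`,
defined via the `q`-Pascal recurrence `[n+1, k+1]_q = [n, k]_q + q^(k+1) [n, k+1]_q`. -/
noncomputable def qbinom : ℕ → ℕ → Polynomial ℤ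
  | _, 0 => 1
  | 0, _ + 1 => 0
  | n + 1, k + 1 => qbinom n k + Polynomial.X ^ (k + 1) * qbinom n (k + 1)

lemma qbinom_zero_right (n : ℕ) : qbinom n 0 = 1 := by cases n <;> rfl

lemma qbinom_eq_zero : ∀ n k : ℕ, n < k → qbinom n k = 0
  | 0, _ + 1, _ => rfl
  | n + 1, k + 1, h => by
      rw [qbinom, qbinom_eq_zero n k (by omega), qbinom_eq_zero n (k + 1) (by omega)]
      ring

lemma qbinom_ratio : ∀ n k : ℕ,
    (X ^ (k + 1) - 1) * qbinom n (k + 1) = (X ^ (n - k) - 1) * qbinom n k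
  | 0, k => by
      rw [qbinom_eq_zero 0 (k + 1) (by omega), Nat.zero_sub]
      simp
  | n + 1, 0 => by
      have h := qbinom_ratio n 0
      rw [qbinom_zero_right] at h
      rw [show qbinom (n + 1) (0 + 1) = qbinom n 0 + X ^ (0 + 1) * qbinom n (0 + 1) from rfl]
      simp only [qbinom_zero_right]
      have hx : (X : Polynomial ℤ) ^ (0 + 1) * X ^ (n - 0) = X ^ (n + 1 - 0) := by
        rw [← pow_add]; congr 1; omega
      linear_combination (X : Polynomial ℤ) ^ (0 + 1) * h + hx
  | n + 1, j + 1 => by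
      rcases le_or_gt n j with hle | hlt
      · rw [qbinom_eq_zero (n + 1) (j + 1 + 1) (by omega), show n + 1 - (j + 1) = 0 by omega]
        simp
      · have h1 := qbinom_ratio n (j + 1)
        have h2 := qbinom_ratio n j
        rw [show qbinom (n + 1) (j + 1 + 1)
              = qbinom n (j + 1) + X ^ (j + 1 + 1) * qbinom n (j + 1 + 1) from rfl,
            show qbinom (n + 1) (j + 1) = qbinom n j + X ^ (j + 1) * qbinom n (j + 1) from rfl,
            show n + 1 - (j + 1) = n - j from by omega]
        have hx : (X : Polynomial ℤ) ^ (j + 1 + 1) * X ^ (n - (j + 1))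
            = X ^ (j + 1) * X ^ (n - j) := by
          rw [← pow_add, ← pow_add]; congr 1; omega
        linear_combination (X : Polynomial ℤ) ^ (j + 1 + 1) * h1
          + h2 + qbinom n (j + 1) * hx

lemma cyclotomic_not_dvd_X_pow_sub_one (d m : ℕ) (hm : 0 < m) (hmd : m < d) :
    ¬ Polynomial.cyclotomic d ℤ ∣ (X ^ m - 1 : Polynomial ℤ) := by
  intro hdvd
  have hd : 0 < d := lt_trans hm hmd
  have hζ : IsPrimitiveRoot (Complex.exp (2 * Real.pi * Complex.I / d)) d :=
    Complex.isPrimitiveRoot_exp d hd.ne'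
  set ζ := Complex.exp (2 * Real.pi * Complex.I / d)
  have hdvdC : Polynomial.cyclotomic d ℂ ∣ (X ^ m - 1 : Polynomial ℂ) := by
    have := Polynomial.map_dvd (Int.castRingHom ℂ) hdvd
    simpa [Polynomial.map_cyclotomic] using this
  haveI : NeZero d := ⟨hd.ne'⟩
  have hroot : IsRoot (cyclotomic d ℂ) ζ := (Polynomial.isRoot_cyclotomic_iff).mpr hζ
  have hζm : ζ ^ m = 1 := by
    obtain ⟨g, hg⟩ := hdvdC
    have := congrArg (fun p => Polynomial.eval ζ p) hg
    simp only [Polynomial.eval_sub, Polynomial.eval_pow, Polynomial.eval_X,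
      Polynomial.eval_one, Polynomial.eval_mul] at this
    rw [hroot] at this
    linear_combination this
  have : d ∣ m := hζ.dvd_of_pow_eq_one m hζm
  exact absurd (Nat.le_of_dvd hm this) (by omega)

lemma qbinom_cyclo_key (d : ℕ) (hd : 0 < d) : ∀ k : ℕ, k ≤ d - 1 →
    Polynomial.cyclotomic d ℤ ∣
      Polynomial.X ^ (k * (k + 1) / 2) * qbinom (d - 1) k - (-1) ^ k
  | 0, _ => by rw [qbinom_zero_right]; simp
  | k + 1, hk => by
      have IH := qbinom_cyclo_key d hd k (by omega)
      have hprime : Prime (Polynomial.cyclotomic d ℤ) :=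
        UniqueFactorizationMonoid.irreducible_iff_prime.mp (cyclotomic.irreducible hd)
      have hnd : ¬ Polynomial.cyclotomic d ℤ ∣ (X ^ (k + 1) - 1 : Polynomial ℤ) :=
        cyclotomic_not_dvd_X_pow_sub_one d (k + 1) (by omega) (by omega)
      have hXd : Polynomial.cyclotomic d ℤ ∣ (X ^ d - 1 : Polynomial ℤ) :=
        cyclotomic.dvd_X_pow_sub_one d ℤ
      have S := qbinom_ratio (d - 1) k
      have hT : (k + 1) * (k + 1 + 1) / 2 = k * (k + 1) / 2 + (k + 1) := by
        have h2 : (k + 1) * (k + 1 + 1) = k * (k + 1) + (k + 1) * 2 := by ring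
        rw [h2, Nat.add_mul_div_right _ _ (by norm_num : (0:ℕ) < 2)]
      have hXpow : (X : Polynomial ℤ) ^ (k + 1) * X ^ (d - 1 - k) = X ^ d := by
        rw [← pow_add]; congr 1; omega
      have key : (X ^ (k + 1) - 1) *
            (X ^ ((k + 1) * (k + 1 + 1) / 2) * qbinom (d - 1) (k + 1) - (-1) ^ (k + 1))
          = (X ^ d - 1) * (X ^ (k * (k + 1) / 2) * qbinom (d - 1) k)
            - (X ^ (k + 1) - 1)
              * (X ^ (k * (k + 1) / 2) * qbinom (d - 1) k - (-1) ^ k) := by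
        rw [hT, pow_add]
        linear_combination (X ^ (k * (k + 1) / 2) * X ^ (k + 1) : Polynomial ℤ) * S
          + (X ^ (k * (k + 1) / 2) * qbinom (d - 1) k : Polynomial ℤ) * hXpow
      have hdvdprod : Polynomial.cyclotomic d ℤ ∣ (X ^ (k + 1) - 1) *
          (X ^ ((k + 1) * (k + 1 + 1) / 2) * qbinom (d - 1) (k + 1) - (-1) ^ (k + 1)) := by
        rw [key]
        exact dvd_sub (hXd.mul_right _) (IH.mul_left _)
      exact (hprime.dvd_or_dvd hdvdprod).resolve_left hnd

theorem stmt_18 (d k : ℕ) (hd : 0 < d) (hk : k ≤ d - 1) :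
    Polynomial.cyclotomic d ℤ ∣
      Polynomial.X ^ (k * (k + 1) / 2) * qbinom (d - 1) k - (-1) ^ k :=
  qbinom_cyclo_key d hd k hk
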